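/- Let X₁,…,Xₙ be independent mean-zero random vectors in ℝ^d with ‖Xᵢ‖ ≤ B almost surely. Then for all t ≥ 0, P(‖∑ᵢ Xᵢ‖ ≥ t) ≤ 2·exp(−t²/(2nB²)). -/

import Mathlib

open MeasureTheory Matrix
open scoped Classical

/-- Euclidean norm on `Fin d → ℝ`. -/
noncomputable def enorm' {d : ℕ} (v : Fin d → ℝ) : ℝ := Real.sqrt (∑ i, (v i)^2)

/-- Euclidean inner product on `Fin d → ℝ`. -/
noncomputable def einner' {d : ℕ} (v w : Fin d → ℝ) : ℝ := ∑ i, v i * w i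

/-- Operator (spectral) norm of a real matrix. -/
noncomputable def opNorm {d : ℕ} (M : Matrix (Fin d) (Fin d) ℝ) : ℝ :=
  ‖(Matrix.toEuclideanCLM (𝕜 := ℝ) M :
      EuclideanSpace ℝ (Fin d) →L[ℝ] EuclideanSpace ℝ (Fin d))‖

/-- Positive semidefinite square root (junk value `0` on non-PSD matrices). -/
noncomputable def psqrt {d : ℕ} (A : Matrix (Fin d) (Fin d) ℝ) : Matrix (Fin d) (Fin d) ℝ :=
  if h : A.PosSemidef then
    (h.1.eigenvectorUnitary : Matrix (Fin d) (Fin d) ℝ) *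
      diagonal (fun i => Real.sqrt (h.1.eigenvalues i)) *
      (star h.1.eigenvectorUnitary : Matrix (Fin d) (Fin d) ℝ)
  else 0

/-- Entrywise expectation of a matrix-valued function. -/
noncomputable def mExp {d : ℕ} (p : Measure (Fin d → ℝ))
    (f : (Fin d → ℝ) → Matrix (Fin d) (Fin d) ℝ) : Matrix (Fin d) (Fin d) ℝ :=
  Matrix.of fun i j => ∫ x, f x i j ∂p

/-- The LDP operator `F(U) = E[(U x xᵀ U)/‖U x‖ · 1{x ≠ 0}] + λ U`. -/
noncomputable def FLDP {d : ℕ} (p : Measure (Fin d → ℝ)) (lam : ℝ)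
    (U : Matrix (Fin d) (Fin d) ℝ) : Matrix (Fin d) (Fin d) ℝ :=
  mExp p (fun x => if x = 0 then 0
    else (enorm' (U.mulVec x))⁻¹ • vecMulVec (U.mulVec x) (U.mulVec x)) + lam • U

/-- The DP operator `G(W) = E[(W x xᵀ W)/(1 + γ‖W x‖)] + λ W`. -/
noncomputable def FJDP {d : ℕ} (p : Measure (Fin d → ℝ)) (γ lam : ℝ)
    (W : Matrix (Fin d) (Fin d) ℝ) : Matrix (Fin d) (Fin d) ℝ :=
  mExp p (fun x => (1 + γ * enorm' (W.mulVec x))⁻¹ • vecMulVec (W.mulVec x) (W.mulVec x))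
    + lam • W

/-- `sym(A) = (Aᵀ A)^{1/2}`. -/
noncomputable def symMat {d : ℕ} (A : Matrix (Fin d) (Fin d) ℝ) : Matrix (Fin d) (Fin d) ℝ :=
  psqrt (Aᵀ * A)

/-- Smallest eigenvalue of a Hermitian matrix (junk value `0` otherwise). -/
noncomputable def lmin {d : ℕ} (A : Matrix (Fin d) (Fin d) ℝ) : ℝ :=
  if h : A.IsHermitian then ⨅ i, h.eigenvalues i else 0

/-- Largest eigenvalue of a Hermitian matrix (junk value `0` otherwise). -/
noncomputable def lmax {d : ℕ} (A : Matrix (Fin d) (Fin d) ℝ) : ℝ :=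
  if h : A.IsHermitian then ⨆ i, h.eigenvalues i else 0

section AuxHoeffding

open scoped RealInnerProductSpace


lemma my_sinh_le_mul_cosh {y : ℝ} (hy : 0 ≤ y) : Real.sinh y ≤ y * Real.cosh y := by
  have key : ∀ t : ℝ, HasDerivAt (fun t => t * Real.cosh t - Real.sinh t) (t * Real.sinh t) t := by
    intro t
    have h := ((hasDerivAt_id t).mul (Real.hasDerivAt_cosh t)).sub (Real.hasDerivAt_sinh t)
    refine h.congr_deriv ?_
    simp only [id]
    ring
  have hmono : Monotone (fun t => t * Real.cosh t - Real.sinh t) := by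
    refine monotone_of_deriv_nonneg (fun t => (key t).differentiableAt) (fun t => ?_)
    rw [(key t).deriv]
    rcases le_total 0 t with h | h
    · exact mul_nonneg h (by rwa [Real.sinh_nonneg_iff])
    · nlinarith [Real.sinh_nonpos_iff.2 h]
  have := hmono hy
  simpa using this

lemma my_convexOn_cosh_sqrt : ConvexOn ℝ (Set.Ici (0:ℝ)) (fun t => Real.cosh (Real.sqrt t)) := by
  refine convexOn_of_hasDerivWithinAt2_nonneg (convex_Ici 0)
    (f' := fun t => Real.sinh (Real.sqrt t) * (2 * Real.sqrt t)⁻¹)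
    (f'' := fun t => (Real.cosh (Real.sqrt t) * (1 / (2 * Real.sqrt t))) * (2 * Real.sqrt t)⁻¹
      + Real.sinh (Real.sqrt t) * (-(2 * (1 / (2 * Real.sqrt t))) / (2 * Real.sqrt t) ^ 2))
    ((Real.continuous_cosh.comp Real.continuous_sqrt).continuousOn) ?_ ?_ ?_
  · intro x hx
    rw [interior_Ici] at hx
    have hx0 : (0:ℝ) < x := hx
    have h1 : HasDerivAt Real.sqrt (1 / (2 * Real.sqrt x)) x := Real.hasDerivAt_sqrt hx0.ne'
    have h2 : HasDerivAt (fun t => Real.cosh (Real.sqrt t))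
        (Real.sinh (Real.sqrt x) * (1 / (2 * Real.sqrt x))) x :=
      (Real.hasDerivAt_cosh (Real.sqrt x)).comp x h1
    have : Real.sinh (Real.sqrt x) * (1 / (2 * Real.sqrt x))
        = Real.sinh (Real.sqrt x) * (2 * Real.sqrt x)⁻¹ := by rw [one_div]
    exact (this ▸ h2).hasDerivWithinAt
  · intro x hx
    rw [interior_Ici] at hx
    have hx0 : (0:ℝ) < x := hx
    have hs : (0:ℝ) < Real.sqrt x := Real.sqrt_pos.2 hx0
    have h1 : HasDerivAt Real.sqrt (1 / (2 * Real.sqrt x)) x := Real.hasDerivAt_sqrt hx0.ne'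
    have h2 : HasDerivAt (fun t => Real.sinh (Real.sqrt t))
        (Real.cosh (Real.sqrt x) * (1 / (2 * Real.sqrt x))) x :=
      (Real.hasDerivAt_sinh (Real.sqrt x)).comp x h1
    have h3 : HasDerivAt (fun t => 2 * Real.sqrt t) (2 * (1 / (2 * Real.sqrt x))) x :=
      h1.const_mul 2
    have h4 : HasDerivAt (fun t => (2 * Real.sqrt t)⁻¹)
        (-(2 * (1 / (2 * Real.sqrt x))) / (2 * Real.sqrt x) ^ 2) x :=
      h3.inv (by positivity)
    exact (h2.mul h4).hasDerivWithinAt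
  · intro x hx
    rw [interior_Ici] at hx
    have hx0 : (0:ℝ) < x := hx
    have hs : (0:ℝ) < Real.sqrt x := Real.sqrt_pos.2 hx0
    have hkey := my_sinh_le_mul_cosh hs.le
    have heq : (Real.cosh (Real.sqrt x) * (1 / (2 * Real.sqrt x))) * (2 * Real.sqrt x)⁻¹
        + Real.sinh (Real.sqrt x) * (-(2 * (1 / (2 * Real.sqrt x))) / (2 * Real.sqrt x) ^ 2)
        = (Real.sqrt x * Real.cosh (Real.sqrt x) - Real.sinh (Real.sqrt x))
          / (4 * Real.sqrt x ^ 3) := by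
      field_simp
      ring
    rw [heq]
    apply div_nonneg (by linarith) (by positivity)



lemma my_chord {f : ℝ → ℝ} (hf : ConvexOn ℝ (Set.Ici 0) f) {a b t : ℝ}
    (ha : 0 ≤ a) (hat : a ≤ t) (htb : t ≤ b) (hab : a < b) :
    f t ≤ (b - t) / (b - a) * f a + (t - a) / (b - a) * f b := by
  have hba : (0:ℝ) < b - a := by linarith
  have h1 : (0:ℝ) ≤ (b - t) / (b - a) := div_nonneg (by linarith) hba.le
  have h2 : (0:ℝ) ≤ (t - a) / (b - a) := div_nonneg (by linarith) hba.le
  have h3 : (b - t) / (b - a) + (t - a) / (b - a) = 1 := by field_simp; ring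
  have h4 := hf.2 (Set.mem_Ici.2 ha) (Set.mem_Ici.2 (by linarith : (0:ℝ) ≤ b)) h1 h2 h3
  simp only [smul_eq_mul] at h4
  have h5 : (b - t) / (b - a) * a + (t - a) / (b - a) * b = t := by
    field_simp
    ring
  rw [h5] at h4
  exact h4

lemma my_pointwise {l r B u w : ℝ} (hl : 0 ≤ l) (hr : 0 < r) (hB : 0 < B)
    (hu : |u| ≤ r * B) (hw2 : w ^ 2 ≤ r ^ 2 + 2 * u + B ^ 2) :
    Real.cosh (l * w) ≤ Real.cosh (l * r) * Real.cosh (l * B)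
      + Real.sinh (l * r) * Real.sinh (l * B) / (r * B) * u := by
  rcases hl.eq_or_lt with h0 | hl
  · simp [← h0]
  have hu1 : -(r * B) ≤ u := neg_le_of_abs_le hu
  have hu2 : u ≤ r * B := le_of_abs_le hu
  set a := (l * (r - B)) ^ 2 with ha_def
  set b := (l * (r + B)) ^ 2 with hb_def
  set t := l ^ 2 * (r ^ 2 + 2 * u + B ^ 2) with ht_def
  have hta : a ≤ t := by rw [ha_def, ht_def]; nlinarith
  have htb : t ≤ b := by rw [hb_def, ht_def]; nlinarith
  have ha0 : 0 ≤ a := sq_nonneg _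
  have hab : a < b := by
    have h : b - a = 4 * l ^ 2 * r * B := by rw [ha_def, hb_def]; ring
    have h2 : (0:ℝ) < 4 * l ^ 2 * r * B := by positivity
    linarith
  -- step 1 : cosh (l * w) ≤ cosh (sqrt t)
  have hst : 0 ≤ t := ha0.trans hta
  have step1 : Real.cosh (l * w) ≤ Real.cosh (Real.sqrt t) := by
    have : Real.cosh (l * w) = Real.cosh (Real.sqrt ((l * w) ^ 2)) := by
      rw [Real.sqrt_sq_eq_abs, Real.cosh_abs]
    rw [this, Real.cosh_le_cosh]
    rw [abs_of_nonneg (Real.sqrt_nonneg _), abs_of_nonneg (Real.sqrt_nonneg _)]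
    apply Real.sqrt_le_sqrt
    rw [ht_def]
    nlinarith [sq_nonneg l]
  -- step 2 : chord
  have step2 := my_chord my_convexOn_cosh_sqrt ha0 hta htb hab
  -- step 3 : endpoints
  have e1 : Real.cosh (Real.sqrt a) = Real.cosh (l * r - l * B) := by
    rw [ha_def, Real.sqrt_sq_eq_abs, Real.cosh_abs, mul_sub]
  have e2 : Real.cosh (Real.sqrt b) = Real.cosh (l * r + l * B) := by
    rw [hb_def, Real.sqrt_sq_eq_abs, Real.cosh_abs, mul_add]
  rw [e1, e2] at step2
  refine step1.trans (step2.trans (le_of_eq ?_))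
  rw [Real.cosh_sub, Real.cosh_add, ha_def, hb_def, ht_def]
  have hbma : (l * (r + B)) ^ 2 - (l * (r - B)) ^ 2 = 4 * l ^ 2 * r * B := by ring
  rw [hbma]
  field_simp
  ring

open MeasureTheory
open scoped RealInnerProductSpace

variable {d : ℕ}

local notation "E" => EuclideanSpace ℝ (Fin d)

lemma my_stepA (ν : Measure (EuclideanSpace ℝ (Fin d))) [IsProbabilityMeasure ν]
    {B l : ℝ} (hl : 0 ≤ l) (hB : 0 ≤ B)
    (hb : ∀ᵐ x ∂ν, ‖x‖ ≤ B) (hm : (∫ x, x ∂ν) = 0) (s : EuclideanSpace ℝ (Fin d)) :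
    ∫ x, Real.cosh (l * ‖s + x‖) ∂ν
      ≤ Real.cosh (l * ‖s‖) * Real.exp (l ^ 2 * B ^ 2 / 2) := by
  have hcont : Continuous (fun x : E => Real.cosh (l * ‖s + x‖)) := by fun_prop
  have hfb : ∀ᵐ x ∂ν, ‖Real.cosh (l * ‖s + x‖)‖ ≤ Real.cosh (l * (‖s‖ + B)) := by
    filter_upwards [hb] with x hx
    rw [Real.norm_eq_abs, abs_of_pos (Real.cosh_pos _), Real.cosh_le_cosh]
    have h1 : ‖s + x‖ ≤ ‖s‖ + B := (norm_add_le _ _).trans (by linarith)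
    have h2 : 0 ≤ ‖s‖ + B := by positivity
    rw [abs_of_nonneg (by positivity), abs_of_nonneg (by positivity)]
    exact mul_le_mul_of_nonneg_left h1 hl
  have hfint : Integrable (fun x : E => Real.cosh (l * ‖s + x‖)) ν :=
    (integrable_const _).mono' hcont.aestronglyMeasurable hfb
  have hcosh_exp : Real.cosh (l * B) ≤ Real.exp (l ^ 2 * B ^ 2 / 2) := by
    have := Real.cosh_le_exp_half_sq (l * B)
    calc Real.cosh (l * B) ≤ Real.exp ((l * B) ^ 2 / 2) := this
      _ = Real.exp (l ^ 2 * B ^ 2 / 2) := by rw [mul_pow]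
  by_cases hrB : ‖s‖ * B = 0
  · -- degenerate case
    have key : Real.cosh (l * (‖s‖ + B)) = Real.cosh (l * ‖s‖) * Real.cosh (l * B) := by
      rcases mul_eq_zero.1 hrB with h | h
      · rw [h]; simp
      · rw [h]; simp
    have : ∫ x, Real.cosh (l * ‖s + x‖) ∂ν ≤ ∫ _ : E, Real.cosh (l * (‖s‖ + B)) ∂ν := by
      refine integral_mono_ae hfint (integrable_const _) ?_
      filter_upwards [hfb] with x hx
      exact (le_abs_self _).trans (by rwa [Real.norm_eq_abs] at hx)
    rw [integral_const] at this
    simp only [probReal_univ, one_smul] at this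
    refine this.trans ?_
    rw [key]
    exact mul_le_mul_of_nonneg_left hcosh_exp (Real.cosh_pos _).le
  · have hr : 0 < ‖s‖ := by
      rcases (norm_nonneg s).eq_or_lt with h | h
      · exact absurd (by rw [← h]; ring) hrB
      · exact h
    have hBpos : 0 < B := by
      rcases hB.eq_or_lt with h | h
      · exact absurd (by rw [← h]; ring) hrB
      · exact h
    set c₁ := Real.sinh (l * ‖s‖) * Real.sinh (l * B) / (‖s‖ * B) with hc₁
    have hid_int : Integrable (fun x : E => x) ν := by
      refine (integrable_const B).mono' continuous_id.aestronglyMeasurable ?_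
      filter_upwards [hb] with x hx using hx
    have hinner_int : Integrable (fun x : E => ⟪s, x⟫) ν :=
      (innerSL ℝ s).integrable_comp hid_int
    have hinner : (∫ x, ⟪s, x⟫ ∂ν) = 0 := by
      rw [integral_inner hid_int, hm, inner_zero_right]
    have hptwise : ∀ᵐ x ∂ν, Real.cosh (l * ‖s + x‖)
        ≤ Real.cosh (l * ‖s‖) * Real.cosh (l * B) + c₁ * ⟪s, x⟫ := by
      filter_upwards [hb] with x hx
      refine my_pointwise hl hr hBpos ?_ ?_
      · exact (abs_real_inner_le_norm s x).trans
          (mul_le_mul_of_nonneg_left hx (norm_nonneg s))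
      · have := norm_add_sq_real s x
        nlinarith [sq_nonneg ‖x‖, norm_nonneg x]
    have hgint : Integrable
        (fun x : E => Real.cosh (l * ‖s‖) * Real.cosh (l * B) + c₁ * ⟪s, x⟫) ν :=
      (integrable_const _).add (hinner_int.const_mul c₁)
    calc ∫ x, Real.cosh (l * ‖s + x‖) ∂ν
        ≤ ∫ x, (Real.cosh (l * ‖s‖) * Real.cosh (l * B) + c₁ * ⟪s, x⟫) ∂ν :=
          integral_mono_ae hfint hgint hptwise
      _ = Real.cosh (l * ‖s‖) * Real.cosh (l * B) := by
          rw [integral_add (integrable_const _) (hinner_int.const_mul c₁),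
            integral_const, integral_const_mul, hinner]
          simp [measure_univ]
      _ ≤ Real.cosh (l * ‖s‖) * Real.exp (l ^ 2 * B ^ 2 / 2) :=
          mul_le_mul_of_nonneg_left hcosh_exp (Real.cosh_pos _).le

lemma my_stepProd (ν₁ ν₂ : Measure (EuclideanSpace ℝ (Fin d)))
    [IsProbabilityMeasure ν₁] [IsProbabilityMeasure ν₂]
    {B C l : ℝ} (hl : 0 ≤ l) (hB : 0 ≤ B) (hC : 0 ≤ C)
    (hb1 : ∀ᵐ x ∂ν₁, ‖x‖ ≤ C) (hb2 : ∀ᵐ x ∂ν₂, ‖x‖ ≤ B) (hm2 : (∫ x, x ∂ν₂) = 0) :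
    ∫ p : E × E, Real.cosh (l * ‖p.1 + p.2‖) ∂(ν₁.prod ν₂)
      ≤ (∫ x, Real.cosh (l * ‖x‖) ∂ν₁) * Real.exp (l ^ 2 * B ^ 2 / 2) := by
  have hcont : Continuous (fun p : E × E => Real.cosh (l * ‖p.1 + p.2‖)) := by fun_prop
  -- a.e. bound on the product
  have hA1 : MeasurableSet {x : E | ‖x‖ ≤ C} :=
    (isClosed_le continuous_norm continuous_const).measurableSet
  have hA2 : MeasurableSet {x : E | ‖x‖ ≤ B} :=
    (isClosed_le continuous_norm continuous_const).measurableSet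
  have hae : ∀ᵐ p : E × E ∂(ν₁.prod ν₂), ‖p.1‖ ≤ C ∧ ‖p.2‖ ≤ B := by
    rw [ae_iff]
    have hsub : {p : E × E | ¬(‖p.1‖ ≤ C ∧ ‖p.2‖ ≤ B)}
        ⊆ ({x : E | ‖x‖ ≤ C}ᶜ ×ˢ Set.univ) ∪ (Set.univ ×ˢ {x : E | ‖x‖ ≤ B}ᶜ) := by
      intro p hp
      simp only [Set.mem_setOf_eq, not_and_or] at hp
      rcases hp with h | h
      · exact Or.inl ⟨h, Set.mem_univ _⟩
      · exact Or.inr ⟨Set.mem_univ _, h⟩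
    refine le_antisymm (le_trans (measure_mono hsub) (le_trans (measure_union_le _ _) ?_))
      (zero_le)
    have e1 : ν₁ {x : E | ‖x‖ ≤ C}ᶜ = 0 := by
      simpa [Set.compl_setOf] using ae_iff.1 hb1
    have e2 : ν₂ {x : E | ‖x‖ ≤ B}ᶜ = 0 := by
      simpa [Set.compl_setOf] using ae_iff.1 hb2
    rw [Measure.prod_prod, Measure.prod_prod, e1, e2]
    simp
  have hfb : ∀ᵐ p : E × E ∂(ν₁.prod ν₂),
      ‖Real.cosh (l * ‖p.1 + p.2‖)‖ ≤ Real.cosh (l * (C + B)) := by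
    filter_upwards [hae] with p hp
    rw [Real.norm_eq_abs, abs_of_pos (Real.cosh_pos _), Real.cosh_le_cosh]
    have h1 : ‖p.1 + p.2‖ ≤ C + B := (norm_add_le _ _).trans (by linarith [hp.1, hp.2])
    rw [abs_of_nonneg (by positivity), abs_of_nonneg (by positivity)]
    exact mul_le_mul_of_nonneg_left h1 hl
  have hfint : Integrable (fun p : E × E => Real.cosh (l * ‖p.1 + p.2‖)) (ν₁.prod ν₂) :=
    (integrable_const _).mono' hcont.aestronglyMeasurable hfb
  rw [integral_prod _ hfint]
  have hout_int : Integrable (fun x : E => ∫ y, Real.cosh (l * ‖x + y‖) ∂ν₂) ν₁ :=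
    hfint.integral_prod_left
  have hrhs_int : Integrable
      (fun x : E => Real.cosh (l * ‖x‖) * Real.exp (l ^ 2 * B ^ 2 / 2)) ν₁ := by
    refine Integrable.mul_const ?_ _
    refine (integrable_const (Real.cosh (l * C))).mono'
      (by fun_prop : Continuous fun x : E => Real.cosh (l * ‖x‖)).aestronglyMeasurable ?_
    filter_upwards [hb1] with x hx
    rw [Real.norm_eq_abs, abs_of_pos (Real.cosh_pos _), Real.cosh_le_cosh]
    rw [abs_of_nonneg (by positivity), abs_of_nonneg (by positivity)]
    exact mul_le_mul_of_nonneg_left hx hl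
  calc ∫ x, (∫ y, Real.cosh (l * ‖x + y‖) ∂ν₂) ∂ν₁
      ≤ ∫ x, Real.cosh (l * ‖x‖) * Real.exp (l ^ 2 * B ^ 2 / 2) ∂ν₁ :=
        integral_mono hout_int hrhs_int (fun x => my_stepA ν₂ hl hB hb2 hm2 x)
    _ = (∫ x, Real.cosh (l * ‖x‖) ∂ν₁) * Real.exp (l ^ 2 * B ^ 2 / 2) := by
        rw [integral_mul_const]

lemma my_induction {Ω : Type*} [MeasurableSpace Ω] (μ : Measure Ω) [IsProbabilityMeasure μ]
    {n : ℕ} (X : Fin n → Ω → EuclideanSpace ℝ (Fin d)) {B l : ℝ} (hl : 0 ≤ l) (hB : 0 ≤ B)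
    (hmeas : ∀ i, Measurable (X i))
    (hindep : ProbabilityTheory.iIndepFun X μ)
    (hmean : ∀ i, (∫ ω, X i ω ∂μ) = 0)
    (hbound : ∀ i, ∀ᵐ ω ∂μ, ‖X i ω‖ ≤ B) :
    ∀ s : Finset (Fin n),
      ∫ ω, Real.cosh (l * ‖∑ i ∈ s, X i ω‖) ∂μ ≤ Real.exp (l ^ 2 * B ^ 2 / 2) ^ s.card := by
  intro s
  induction s using Finset.induction_on with
  | empty => simp
  | @insert a s' ha ih =>
    set S : Ω → EuclideanSpace ℝ (Fin d) := fun ω => ∑ i ∈ s', X i ω with hS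
    have hSmeas : Measurable S := Finset.measurable_sum s' (fun i _ => hmeas i)
    have hInd : ProbabilityTheory.IndepFun S (X a) μ := by
      have h := hindep.indepFun_finsetSum_of_notMem hmeas ha
      have he : (∑ j ∈ s', X j) = S := by funext ω; simp [hS]
      rwa [he] at h
    haveI : IsProbabilityMeasure (μ.map S) := Measure.isProbabilityMeasure_map hSmeas.aemeasurable
    haveI : IsProbabilityMeasure (μ.map (X a)) :=
      Measure.isProbabilityMeasure_map (hmeas a).aemeasurable
    have hmap := (ProbabilityTheory.indepFun_iff_map_prod_eq_prod_map_map
      hSmeas.aemeasurable (hmeas a).aemeasurable).1 hInd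
    have hbS : ∀ᵐ ω ∂μ, ‖S ω‖ ≤ s'.card * B := by
      have hball : ∀ᵐ ω ∂μ, ∀ i, ‖X i ω‖ ≤ B := ae_all_iff.2 hbound
      filter_upwards [hball] with ω hω
      calc ‖∑ i ∈ s', X i ω‖ ≤ ∑ i ∈ s', ‖X i ω‖ := norm_sum_le _ _
        _ ≤ s'.card • B := Finset.sum_le_card_nsmul s' _ B (fun i _ => hω i)
        _ = s'.card * B := nsmul_eq_mul _ _
    have hsetC : MeasurableSet {z : EuclideanSpace ℝ (Fin d) | ‖z‖ ≤ (s'.card : ℝ) * B} :=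
      (isClosed_le continuous_norm continuous_const).measurableSet
    have hsetB : MeasurableSet {z : EuclideanSpace ℝ (Fin d) | ‖z‖ ≤ B} :=
      (isClosed_le continuous_norm continuous_const).measurableSet
    have hbSmap : ∀ᵐ z ∂(μ.map S), ‖z‖ ≤ s'.card * B := by
      rw [ae_map_iff hSmeas.aemeasurable hsetC]; exact hbS
    have hbXmap : ∀ᵐ z ∂(μ.map (X a)), ‖z‖ ≤ B := by
      rw [ae_map_iff (hmeas a).aemeasurable hsetB]; exact hbound a
    have hmXmap : (∫ x, x ∂(μ.map (X a))) = 0 := by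
      exact (integral_map (hmeas a).aemeasurable aestronglyMeasurable_id).trans (hmean a)
    have hcont : Continuous (fun p : (EuclideanSpace ℝ (Fin d)) × (EuclideanSpace ℝ (Fin d))
        => Real.cosh (l * ‖p.1 + p.2‖)) := by fun_prop
    have hCnn : (0:ℝ) ≤ s'.card * B := by positivity
    have key : ∫ ω, Real.cosh (l * ‖∑ i ∈ insert a s', X i ω‖) ∂μ
        ≤ (∫ z, Real.cosh (l * ‖z‖) ∂(μ.map S)) * Real.exp (l ^ 2 * B ^ 2 / 2) := by
      have e1 : ∀ ω, (∑ i ∈ insert a s', X i ω) = S ω + X a ω := by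
        intro ω; rw [Finset.sum_insert ha, add_comm]
      calc ∫ ω, Real.cosh (l * ‖∑ i ∈ insert a s', X i ω‖) ∂μ
          = ∫ ω, Real.cosh (l * ‖S ω + X a ω‖) ∂μ := by
            congr 1; funext ω; rw [e1 ω]
        _ = ∫ p : (EuclideanSpace ℝ (Fin d)) × (EuclideanSpace ℝ (Fin d)),
              Real.cosh (l * ‖p.1 + p.2‖) ∂(μ.map (fun ω => (S ω, X a ω))) := by
            rw [integral_map (hSmeas.aemeasurable.prodMk (hmeas a).aemeasurable)
              hcont.aestronglyMeasurable]
        _ = ∫ p : (EuclideanSpace ℝ (Fin d)) × (EuclideanSpace ℝ (Fin d)),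
              Real.cosh (l * ‖p.1 + p.2‖) ∂((μ.map S).prod (μ.map (X a))) := by rw [hmap]
        _ ≤ _ := my_stepProd _ _ hl hB hCnn hbSmap hbXmap hmXmap
    have hpull : (∫ z, Real.cosh (l * ‖z‖) ∂(μ.map S))
        = ∫ ω, Real.cosh (l * ‖S ω‖) ∂μ := by
      rw [integral_map hSmeas.aemeasurable
        (by fun_prop : Continuous fun z : EuclideanSpace ℝ (Fin d)
          => Real.cosh (l * ‖z‖)).aestronglyMeasurable]
    refine key.trans ?_
    rw [hpull]
    have hexp : (0:ℝ) < Real.exp (l ^ 2 * B ^ 2 / 2) := Real.exp_pos _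
    calc (∫ ω, Real.cosh (l * ‖S ω‖) ∂μ) * Real.exp (l ^ 2 * B ^ 2 / 2)
        ≤ Real.exp (l ^ 2 * B ^ 2 / 2) ^ s'.card * Real.exp (l ^ 2 * B ^ 2 / 2) :=
          mul_le_mul_of_nonneg_right ih hexp.le
      _ = Real.exp (l ^ 2 * B ^ 2 / 2) ^ (insert a s').card := by
          rw [Finset.card_insert_of_notMem ha]
          exact (pow_succ _ _).symm

theorem stmt16' {Ω : Type*} [MeasurableSpace Ω] (μ : Measure Ω) [IsProbabilityMeasure μ]
    {d n : ℕ} (X : Fin n → Ω → EuclideanSpace ℝ (Fin d)) (B : ℝ)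
    (hmeas : ∀ i, Measurable (X i))
    (hindep : ProbabilityTheory.iIndepFun X μ)
    (hmean : ∀ i, (∫ ω, X i ω ∂μ) = 0)
    (hbound : ∀ i, ∀ᵐ ω ∂μ, ‖X i ω‖ ≤ B) :
    ∀ t : ℝ, 0 ≤ t →
      (μ {ω | t ≤ ‖∑ i, X i ω‖}).toReal
        ≤ 2 * Real.exp (-t^2 / (2 * n * B^2)) := by
  intro t ht
  have hle1 : ∀ (s : Set Ω), (μ s).toReal ≤ 1 := fun s => by
    simpa using ENNReal.toReal_mono ENNReal.one_ne_top (prob_le_one (μ := μ) (s := s))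
  rcases Nat.eq_zero_or_pos n with hn | hn
  · subst hn
    have h0 : 2 * (0:ℕ) * B ^ 2 = (0:ℝ) := by simp
    rw [show ((0:ℕ):ℝ) = (0:ℝ) by simp]
    rw [show (2 * (0:ℝ) * B ^ 2) = (0:ℝ) by ring, div_zero, Real.exp_zero, mul_one]
    linarith [hle1 {ω | t ≤ ‖∑ i, X i ω‖}]
  have hB0 : 0 ≤ B := by
    obtain ⟨ω, hω⟩ := (hbound ⟨0, hn⟩).exists
    exact (norm_nonneg _).trans hω
  by_cases hBz : B = 0
  · subst hBz
    have hsum : ∀ᵐ ω ∂μ, (∑ i, X i ω) = 0 := by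
      filter_upwards [ae_all_iff.2 hbound] with ω hω
      refine Finset.sum_eq_zero fun i _ => ?_
      have := hω i
      have : ‖X i ω‖ = 0 := le_antisymm this (norm_nonneg _)
      exact norm_eq_zero.1 this
    rcases ht.eq_or_lt with h0 | htpos
    · rw [show (2 * (n:ℝ) * 0 ^ 2) = (0:ℝ) by ring, div_zero, Real.exp_zero, mul_one]
      linarith [hle1 {ω | t ≤ ‖∑ i, X i ω‖}]
    · have hz : μ {ω | t ≤ ‖∑ i, X i ω‖} = 0 := by
        have hae : ∀ᵐ ω ∂μ, ¬ (t ≤ ‖∑ i, X i ω‖) := by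
          filter_upwards [hsum] with ω hω
          rw [hω, norm_zero]
          linarith
        rw [ae_iff] at hae
        simpa [not_not] using hae
      rw [hz]
      simp only [ENNReal.toReal_zero]
      positivity
  · have hBpos : 0 < B := lt_of_le_of_ne hB0 (Ne.symm hBz)
    have hnpos : (0:ℝ) < n := by exact_mod_cast hn
    set l := t / (n * B ^ 2) with hl_def
    have hl : 0 ≤ l := div_nonneg ht (by positivity)
    set Y : Ω → ℝ := fun ω => ‖∑ i, X i ω‖ with hY
    have hYmeas : Measurable Y :=
      (Finset.measurable_sum Finset.univ (fun i _ => hmeas i)).norm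
    have hYb : ∀ᵐ ω ∂μ, Y ω ≤ n * B := by
      filter_upwards [ae_all_iff.2 hbound] with ω hω
      calc Y ω ≤ ∑ i, ‖X i ω‖ := norm_sum_le _ _
        _ ≤ Finset.univ.card • B := Finset.sum_le_card_nsmul _ _ B (fun i _ => hω i)
        _ = n * B := by rw [nsmul_eq_mul, Finset.card_univ, Fintype.card_fin]
    have hYnn : ∀ ω, 0 ≤ Y ω := fun ω => norm_nonneg _
    have h_int : Integrable (fun ω => Real.exp (l * Y ω)) μ := by
      refine (integrable_const (Real.exp (l * (n * B)))).mono'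
        (Real.measurable_exp.comp (hYmeas.const_mul l)).aestronglyMeasurable ?_
      filter_upwards [hYb] with ω hω
      rw [Real.norm_eq_abs, abs_of_pos (Real.exp_pos _), Real.exp_le_exp]
      exact mul_le_mul_of_nonneg_left hω hl
    have hcosh_int : Integrable (fun ω => Real.cosh (l * Y ω)) μ := by
      refine (integrable_const (Real.cosh (l * (n * B)))).mono'
        (Real.continuous_cosh.measurable.comp (hYmeas.const_mul l)).aestronglyMeasurable ?_
      filter_upwards [hYb] with ω hω
      rw [Real.norm_eq_abs, abs_of_pos (Real.cosh_pos _), Real.cosh_le_cosh,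
        abs_of_nonneg (mul_nonneg hl (hYnn ω)), abs_of_nonneg (by positivity)]
      exact mul_le_mul_of_nonneg_left hω hl
    have hmain := ProbabilityTheory.measure_ge_le_exp_mul_mgf (X := Y) (μ := μ) (t := l)
      t hl h_int
    have hmgf : ProbabilityTheory.mgf Y μ l ≤ 2 * Real.exp (l ^ 2 * B ^ 2 / 2) ^ n := by
      have hind := my_induction μ X hl hB0 hmeas hindep hmean hbound Finset.univ
      rw [Finset.card_univ, Fintype.card_fin] at hind
      calc ProbabilityTheory.mgf Y μ l = ∫ ω, Real.exp (l * Y ω) ∂μ := rfl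
        _ ≤ ∫ ω, 2 * Real.cosh (l * Y ω) ∂μ := by
            refine integral_mono h_int (hcosh_int.const_mul 2) (fun ω => ?_)
            have h1 := Real.sinh_lt_cosh (l * Y ω)
            have h2 := Real.cosh_add_sinh (l * Y ω)
            linarith
        _ = 2 * ∫ ω, Real.cosh (l * Y ω) ∂μ := integral_const_mul 2 _
        _ ≤ 2 * Real.exp (l ^ 2 * B ^ 2 / 2) ^ n := by linarith [hind]
    refine hmain.trans ?_
    calc Real.exp (-l * t) * ProbabilityTheory.mgf Y μ l
        ≤ Real.exp (-l * t) * (2 * Real.exp (l ^ 2 * B ^ 2 / 2) ^ n) :=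
          mul_le_mul_of_nonneg_left hmgf (Real.exp_pos _).le
      _ = 2 * Real.exp (-t ^ 2 / (2 * n * B ^ 2)) := by
          rw [← Real.exp_nat_mul,
            show Real.exp (-l * t) * (2 * Real.exp (n * (l ^ 2 * B ^ 2 / 2)))
              = 2 * (Real.exp (-l * t) * Real.exp (n * (l ^ 2 * B ^ 2 / 2))) by ring,
            ← Real.exp_add]
          rw [show (-l * t + n * (l ^ 2 * B ^ 2 / 2)) = -t ^ 2 / (2 * n * B ^ 2) by
            rw [hl_def]; field_simp; ring]


end AuxHoeffding

/-- Hoeffding-type inequality for bounded independent mean-zero random vectors. -/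
theorem stmt16 {Ω : Type*} [MeasurableSpace Ω] (μ : Measure Ω) [IsProbabilityMeasure μ]
    {d n : ℕ} (X : Fin n → Ω → EuclideanSpace ℝ (Fin d)) (B : ℝ)
    (hmeas : ∀ i, Measurable (X i))
    (hindep : ProbabilityTheory.iIndepFun X μ)
    (hmean : ∀ i, (∫ ω, X i ω ∂μ) = 0)
    (hbound : ∀ i, ∀ᵐ ω ∂μ, ‖X i ω‖ ≤ B) :
    ∀ t : ℝ, 0 ≤ t →
      (μ {ω | t ≤ ‖∑ i, X i ω‖}).toReal
        ≤ 2 * Real.exp (-t^2 / (2 * n * B^2)) := by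
  exact stmt16' μ X B hmeas hindep hmean hbound
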